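/- Let C₁ and C₂ be two η-prox-regular subsets of R^d, and let d_H(C₁,C₂) := sup_{y ∈ R^d} |d_{C₁}(y) - d_{C₂}(y)| denote the Hausdorff distance. Then for all x ∈ C₁, y ∈ C₂, α ∈ N(C₁,x), β ∈ N(C₂,y), one has ⟨α - β, y - x⟩ - (1/η)(|α|+|β|)|x-y|² ≤ (|α|+|β|)(d_H(C₁,C₂) + (1/η) d_H(C₁,C₂)²). -/

import Mathlib

open Metric Set MeasureTheory
open scoped RealInnerProductSpace NNReal

def projSet {d : ℕ} (C : Set (EuclideanSpace ℝ (Fin d))) (z : EuclideanSpace ℝ (Fin d)) :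
    Set (EuclideanSpace ℝ (Fin d)) :=
  {y | y ∈ C ∧ dist z y = Metric.infDist z C}

def proxNormalCone {d : ℕ} (C : Set (EuclideanSpace ℝ (Fin d)))
    (x : EuclideanSpace ℝ (Fin d)) : Set (EuclideanSpace ℝ (Fin d)) :=
  {v | ∃ s : ℝ, 0 < s ∧ x ∈ projSet C (x + s • v)}

def IsProxRegular {d : ℕ} (η : ℝ) (C : Set (EuclideanSpace ℝ (Fin d))) : Prop :=
  ∀ x ∈ C, ∀ v ∈ proxNormalCone C x, v ≠ 0 →
    Metric.ball (x + (η / ‖v‖) • v) η ∩ C = ∅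

lemma proxreg_key {d : ℕ} {η : ℝ} (hη : 0 < η) {C : Set (EuclideanSpace ℝ (Fin d))}
    (hreg : IsProxRegular η C) {x : EuclideanSpace ℝ (Fin d)} (hx : x ∈ C)
    {v : EuclideanSpace ℝ (Fin d)} (hv : v ∈ proxNormalCone C x)
    {z : EuclideanSpace ℝ (Fin d)} (hz : z ∈ C) :
    ⟪v, z - x⟫ ≤ (‖v‖ / (2 * η)) * ‖z - x‖ ^ 2 := by
  rcases eq_or_ne v 0 with rfl | hv0
  · simp
  · have hball := hreg x hx v hv hv0
    have hz' : z ∉ Metric.ball (x + (η / ‖v‖) • v) η := by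
      intro h
      have : z ∈ Metric.ball (x + (η / ‖v‖) • v) η ∩ C := ⟨h, hz⟩
      rw [hball] at this; exact this
    rw [Metric.mem_ball, not_lt, dist_eq_norm] at hz'
    have hnv : 0 < ‖v‖ := norm_pos_iff.2 hv0
    set c : ℝ := η / ‖v‖ with hc
    have hcpos : 0 < c := div_pos hη hnv
    have heq : z - (x + c • v) = (z - x) - c • v := by abel
    have hsq : η ^ 2 ≤ ‖(z - x) - c • v‖ ^ 2 := by
      rw [← heq]
      have := hz'
      nlinarith [norm_nonneg (z - (x + c • v))]
    have hexp : ‖(z - x) - c • v‖ ^ 2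
        = ‖z - x‖ ^ 2 - 2 * c * ⟪v, z - x⟫ + c ^ 2 * ‖v‖ ^ 2 := by
      rw [@norm_sub_sq_real, real_inner_smul_right, norm_smul, Real.norm_eq_abs,
        abs_of_pos hcpos, real_inner_comm]
      ring
    have hcv : c ^ 2 * ‖v‖ ^ 2 = η ^ 2 := by
      rw [hc, div_pow, div_mul_cancel₀ _ (pow_ne_zero 2 hnv.ne')]
    rw [hexp, hcv] at hsq
    have h2 : 2 * c * ⟪v, z - x⟫ ≤ ‖z - x‖ ^ 2 := by linarith
    rw [hc] at h2
    rw [div_mul_eq_mul_div, le_div_iff₀ (by linarith)]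
    have h2' : 2 * η * ⟪v, z - x⟫ ≤ ‖z - x‖ ^ 2 * ‖v‖ := by
      have hm := mul_le_mul_of_nonneg_right h2 hnv.le
      calc 2 * η * ⟪v, z - x⟫ = 2 * (η / ‖v‖) * ⟪v, z - x⟫ * ‖v‖ := by
            field_simp
        _ ≤ ‖z - x‖ ^ 2 * ‖v‖ := hm
    linarith

/-- Vladimirov-type estimate between normal cones of two η-prox-regular sets. -/
theorem dV_le_hausdorff {d : ℕ} (η : ℝ) (hη : 0 < η)
    (C₁ C₂ : Set (EuclideanSpace ℝ (Fin d))) (hC₁ : IsClosed C₁) (hC₂ : IsClosed C₂)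
    (hne₁ : C₁.Nonempty) (hne₂ : C₂.Nonempty)
    (hreg₁ : IsProxRegular η C₁) (hreg₂ : IsProxRegular η C₂)
    (hbdd : BddAbove (Set.range fun y : EuclideanSpace ℝ (Fin d) =>
      |Metric.infDist y C₁ - Metric.infDist y C₂|)) :
    ∀ x ∈ C₁, ∀ y ∈ C₂, ∀ a ∈ proxNormalCone C₁ x, ∀ b ∈ proxNormalCone C₂ y,
      ⟪a - b, y - x⟫ - (1 / η) * (‖a‖ + ‖b‖) * ‖x - y‖ ^ 2 ≤
        (‖a‖ + ‖b‖) *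
          ((⨆ z : EuclideanSpace ℝ (Fin d), |Metric.infDist z C₁ - Metric.infDist z C₂|) +
            (1 / η) * (⨆ z : EuclideanSpace ℝ (Fin d),
              |Metric.infDist z C₁ - Metric.infDist z C₂|) ^ 2) := by
  intro x hx y hy a ha b hb
  set D : ℝ := ⨆ z : EuclideanSpace ℝ (Fin d),
      |Metric.infDist z C₁ - Metric.infDist z C₂| with hD
  have hle : ∀ w : EuclideanSpace ℝ (Fin d),
      |Metric.infDist w C₁ - Metric.infDist w C₂| ≤ D := fun w =>
    le_ciSup hbdd w
  have hD0 : 0 ≤ D := le_trans (abs_nonneg _) (hle x)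
  -- nearest point to y in C₁
  obtain ⟨z, hzC, hzd⟩ := hC₁.exists_infDist_eq_dist hne₁ y
  have hyz : ‖y - z‖ ≤ D := by
    have h1 : Metric.infDist y C₂ = 0 := Metric.infDist_zero_of_mem hy
    have := hle y
    rw [h1, sub_zero, abs_of_nonneg Metric.infDist_nonneg] at this
    rw [← dist_eq_norm, ← hzd]; exact this
  -- nearest point to x in C₂
  obtain ⟨w, hwC, hwd⟩ := hC₂.exists_infDist_eq_dist hne₂ x
  have hxw : ‖x - w‖ ≤ D := by
    have h1 : Metric.infDist x C₁ = 0 := Metric.infDist_zero_of_mem hx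
    have := hle x
    rw [h1, abs_sub_comm, sub_zero, abs_of_nonneg Metric.infDist_nonneg] at this
    rw [← dist_eq_norm, ← hwd]; exact this
  have hka := proxreg_key hη hreg₁ hx ha hzC
  have hkb := proxreg_key hη hreg₂ hy hb hwC
  have hzx : ‖z - x‖ ^ 2 ≤ 2 * D ^ 2 + 2 * ‖x - y‖ ^ 2 := by
    have h1 : ‖z - x‖ ≤ ‖y - z‖ + ‖x - y‖ := by
      have := norm_sub_le_norm_sub_add_norm_sub z y x
      calc ‖z - x‖ ≤ ‖z - y‖ + ‖y - x‖ := this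
        _ = ‖y - z‖ + ‖x - y‖ := by rw [norm_sub_rev z y, norm_sub_rev y x]
    have h2 : ‖z - x‖ ≤ D + ‖x - y‖ := by linarith
    have h3 : ‖z - x‖ ^ 2 ≤ (D + ‖x - y‖) ^ 2 := pow_le_pow_left₀ (norm_nonneg _) h2 2
    nlinarith [h3, sq_nonneg (D - ‖x - y‖)]
  have hwy : ‖w - y‖ ^ 2 ≤ 2 * D ^ 2 + 2 * ‖x - y‖ ^ 2 := by
    have h1 : ‖w - y‖ ≤ ‖x - w‖ + ‖x - y‖ := by
      calc ‖w - y‖ ≤ ‖w - x‖ + ‖x - y‖ := norm_sub_le_norm_sub_add_norm_sub w x y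
        _ = ‖x - w‖ + ‖x - y‖ := by rw [norm_sub_rev w x]
    have h2 : ‖w - y‖ ≤ D + ‖x - y‖ := by linarith
    have h3 : ‖w - y‖ ^ 2 ≤ (D + ‖x - y‖) ^ 2 := pow_le_pow_left₀ (norm_nonneg _) h2 2
    nlinarith [h3, sq_nonneg (D - ‖x - y‖)]
  have hA : ⟪a, y - x⟫ ≤ ‖a‖ * D + (1 / η) * ‖a‖ * D ^ 2 + (1 / η) * ‖a‖ * ‖x - y‖ ^ 2 := by
    have hsplit : ⟪a, y - x⟫ = ⟪a, z - x⟫ + ⟪a, y - z⟫ := by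
      rw [← inner_add_right]; congr 1; abel
    have h2 : ⟪a, y - z⟫ ≤ ‖a‖ * D := by
      calc ⟪a, y - z⟫ ≤ ‖a‖ * ‖y - z‖ := real_inner_le_norm a (y - z)
        _ ≤ ‖a‖ * D := mul_le_mul_of_nonneg_left hyz (norm_nonneg a)
    have h3 : ⟪a, z - x⟫ ≤ (‖a‖ / (2 * η)) * (2 * D ^ 2 + 2 * ‖x - y‖ ^ 2) :=
      le_trans hka (mul_le_mul_of_nonneg_left hzx (by positivity))
    have h4 : (‖a‖ / (2 * η)) * (2 * D ^ 2 + 2 * ‖x - y‖ ^ 2)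
        = (1 / η) * ‖a‖ * D ^ 2 + (1 / η) * ‖a‖ * ‖x - y‖ ^ 2 := by
      field_simp
    rw [hsplit]; rw [h4] at h3; linarith
  have hB : ⟪b, x - y⟫ ≤ ‖b‖ * D + (1 / η) * ‖b‖ * D ^ 2 + (1 / η) * ‖b‖ * ‖x - y‖ ^ 2 := by
    have hsplit : ⟪b, x - y⟫ = ⟪b, w - y⟫ + ⟪b, x - w⟫ := by
      rw [← inner_add_right]; congr 1; abel
    have h2 : ⟪b, x - w⟫ ≤ ‖b‖ * D := by
      calc ⟪b, x - w⟫ ≤ ‖b‖ * ‖x - w‖ := real_inner_le_norm b (x - w)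
        _ ≤ ‖b‖ * D := mul_le_mul_of_nonneg_left hxw (norm_nonneg b)
    have h3 : ⟪b, w - y⟫ ≤ (‖b‖ / (2 * η)) * (2 * D ^ 2 + 2 * ‖x - y‖ ^ 2) :=
      le_trans hkb (mul_le_mul_of_nonneg_left hwy (by positivity))
    have h4 : (‖b‖ / (2 * η)) * (2 * D ^ 2 + 2 * ‖x - y‖ ^ 2)
        = (1 / η) * ‖b‖ * D ^ 2 + (1 / η) * ‖b‖ * ‖x - y‖ ^ 2 := by
      field_simp
    rw [hsplit]; rw [h4] at h3; linarith
  have hsub : ⟪a - b, y - x⟫ = ⟪a, y - x⟫ + ⟪b, x - y⟫ := by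
    rw [inner_sub_left]
    have : ⟪b, x - y⟫ = -⟪b, y - x⟫ := by
      rw [← inner_neg_right]; congr 1; abel
    rw [this]; ring
  rw [hsub]
  nlinarith [hA, hB]
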